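/- Replacement lemma: Let x, y be words of length n over {0,…,q−1} with M(x) ≡ M(y) (mod m) and x^{(D)} = y^{(E)} for some D, E ⊆ {1,…,n} with |D| = |E| ≤ d. Suppose there is an index L with x_L = y_L > 0 and x_i = y_i = 0 for all i > L. Then the words x̃, ỹ obtained from x, y by setting position L to 0 (and leaving all other positions unchanged) satisfy M(x̃) ≡ M(ỹ) (mod m) and x̃^{(D̃)} = ỹ^{(Ẽ)} for some sets D̃, Ẽ with |D̃| = |D| and |Ẽ| = |E|. -/

import Mathlib

/-- Weight sequence: `W p d i` = w_i(q,d) where p = q-1; w_i = 0 for i ≤ 0 (encoded by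
ℕ truncated subtraction together with `W p d 0 = 0`), and w_i = 1 + p·∑_{j=1}^d w_{i-j}
for i ≥ 1. -/
def W (p d : ℕ) : ℕ → ℕ
  | 0 => 0
  | (i+1) => 1 + p * ∑ j ∈ Finset.range d, W p d (i - j)
decreasing_by exact Nat.lt_succ_of_le (Nat.sub_le i j)

/-- Moment of a word (1-indexed): M(x) = ∑_{i=1}^{n} w_i x_i. -/
def moment (w : ℕ → ℕ) (x : List ℕ) : ℕ :=
  ∑ i ∈ Finset.range x.length, w (i + 1) * x.getD i 0

/-- Deleted word x^{(D)}: delete the symbols at the (1-indexed) positions in D,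
keeping the remaining symbols in order. -/
def deleteD (x : List ℕ) (D : Finset ℕ) : List ℕ :=
  ((List.range x.length).filter (fun i => (i + 1) ∉ D)).map (fun i => x.getD i 0)

lemma moment_set (w : ℕ → ℕ) (x : List ℕ) (k : ℕ) (hk : k < x.length) :
    moment w x = moment w (x.set k 0) + w (k+1) * x.getD k 0 := by
  unfold moment
  rw [List.length_set]
  rw [← Finset.sum_erase_add _ _ (Finset.mem_range.2 hk),
      ← Finset.sum_erase_add _ _ (Finset.mem_range.2 hk)]
  have h1 : ∀ i ∈ (Finset.range x.length).erase k,
      w (i+1) * (x.set k 0).getD i 0 = w (i+1) * x.getD i 0 := by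
    intro i hi
    have hik : k ≠ i := fun h => (Finset.mem_erase.1 hi).1 h.symm
    rw [List.getD_eq_getElem?_getD, List.getD_eq_getElem?_getD, List.getElem?_set_ne hik]
  rw [Finset.sum_congr rfl h1]
  have h2 : (x.set k 0).getD k 0 = 0 := by
    rw [List.getD_eq_getElem?_getD, List.getElem?_set_self]
    · simp
    · exact hk
  rw [h2]
  ring

lemma deleteD_append (u v : List ℕ) (S : Finset ℕ) :
    deleteD (u ++ v) S = deleteD u (S ∩ Finset.Icc 1 u.length) ++
      ((List.range v.length).filter (fun i => (u.length + i + 1) ∉ S)).map (fun i => v.getD i 0) := by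
  unfold deleteD
  rw [List.length_append, List.range_add, List.filter_append, List.map_append]
  congr 1
  · rw [List.filter_congr (q := fun i => decide ((i+1) ∉ S ∩ Finset.Icc 1 u.length))]
    · apply List.map_congr_left
      intro i hi
      have : i < u.length := List.mem_range.1 (List.mem_of_mem_filter hi)
      exact List.getD_append _ _ _ _ this
    · intro i hi
      have h : i < u.length := List.mem_range.1 hi
      simp only [decide_eq_decide, Finset.mem_inter, Finset.mem_Icc]
      have h1 : 1 ≤ i + 1 := Nat.le_add_left 1 i
      have h2 : i + 1 ≤ u.length := h
      tauto
  · rw [List.filter_map, List.map_map]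
    apply List.map_congr_left
    intro i hi
    simp only [Function.comp_apply]
    rw [List.getD_append_right]
    · congr 1; omega
    · omega

lemma tail_zeros' (v : List ℕ) (p : ℕ → Bool) (hv : ∀ i, i < v.length → p i = true → v.getD i 0 = 0) :
    ∀ a ∈ ((List.range v.length).filter p).map (fun i => v.getD i 0), a = 0 := by
  intro a ha
  obtain ⟨i, hi, rfl⟩ := List.mem_map.1 ha
  have h := List.mem_filter.1 hi
  exact hv i (List.mem_range.1 h.1) h.2

lemma deleteD_pad' (u v : List ℕ) (S : Finset ℕ)
    (hv : ∀ i, i < v.length → (u.length + i + 1) ∉ S → v.getD i 0 = 0) :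
    ∃ t, deleteD (u ++ v) S = deleteD u (S ∩ Finset.Icc 1 u.length) ++ t ∧ ∀ a ∈ t, a = 0 :=
  ⟨_, deleteD_append u v S, tail_zeros' v _ (fun i hi hp => hv i hi (by simpa using hp))⟩

lemma deleteD_pad (u v : List ℕ) (S : Finset ℕ) (hv : ∀ a ∈ v, a = 0) :
    ∃ t, deleteD (u ++ v) S = deleteD u (S ∩ Finset.Icc 1 u.length) ++ t ∧ ∀ a ∈ t, a = 0 := by
  apply deleteD_pad'
  intro i hi _
  rw [List.getD_eq_getElem _ _ hi]
  exact hv _ (List.getElem_mem hi)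

lemma deleteD_pad_cons (u : List ℕ) (c : ℕ) (v : List ℕ) (S : Finset ℕ)
    (hv : ∀ a ∈ v, a = 0) (hS : u.length + 1 ∉ S) :
    ∃ t, deleteD (u ++ c :: v) S = deleteD u (S ∩ Finset.Icc 1 u.length) ++ c :: t
      ∧ ∀ a ∈ t, a = 0 := by
  rw [deleteD_append]
  refine ⟨((List.range v.length).filter (fun i => decide ((u.length + (i+1) + 1) ∉ S))).map
      (fun i => v.getD i 0), ?_, tail_zeros' v _ ?_⟩
  · congr 1
    rw [List.length_cons, List.range_succ_eq_map, List.filter_cons]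
    have h0 : (decide ((u.length + 0 + 1) ∉ S)) = true := by
      simp only [Nat.add_zero, decide_eq_true_eq]; exact hS
    rw [h0]
    simp only [if_true]
    rw [List.map_cons]
    congr 1
    rw [List.filter_map, List.map_map]
    rw [List.filter_congr (q := fun i => decide ((u.length + (i+1) + 1) ∉ S))
      (by intro i _; simp [Function.comp, Nat.succ_eq_add_one])]
    apply List.map_congr_left
    intro i _
    simp [Function.comp, Nat.succ_eq_add_one]
  · intro i hi _
    rw [List.getD_eq_getElem _ _ hi]
    exact hv _ (List.getElem_mem hi)

lemma length_deleteD (x : List ℕ) (S : Finset ℕ) (hS : S ⊆ Finset.Icc 1 x.length) :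
    (deleteD x S).length = x.length - S.card := by
  unfold deleteD
  rw [List.length_map]
  have h1 : ((List.range x.length).filter (fun i => (i+1) ∉ S)).length
      = ((Finset.range x.length).filter (fun i => (i+1) ∉ S)).card := by
    simp [Finset.filter, Finset.range, Multiset.range, Multiset.filter_coe]
  rw [h1]
  have h2 : (Finset.range x.length).filter (fun i => (i+1) ∈ S) = S.image (· - 1) := by
    ext j
    simp only [Finset.mem_filter, Finset.mem_range, Finset.mem_image]
    constructor
    · rintro ⟨hj, hjS⟩
      exact ⟨j+1, hjS, by omega⟩
    · rintro ⟨s, hs, rfl⟩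
      have := Finset.mem_Icc.1 (hS hs)
      constructor
      · omega
      · have : s - 1 + 1 = s := by omega
        rw [this]; exact hs
  have h3 : ((Finset.range x.length).filter (fun i => (i+1) ∈ S)).card = S.card := by
    rw [h2]
    apply Finset.card_image_of_injOn
    intro a ha b hb hab
    simp only at hab
    have ha' := Finset.mem_Icc.1 (hS ha)
    have hb' := Finset.mem_Icc.1 (hS hb)
    omega
  have h4 := Finset.card_filter_add_card_filter_not
    (s := Finset.range x.length) (p := fun i => (i+1) ∈ S)
  simp only [Finset.card_range] at h4
  have h5 : (Finset.filter (fun i => ¬ (i+1) ∈ S) (Finset.range x.length))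
      = (Finset.filter (fun i => (i+1) ∉ S) (Finset.range x.length)) := rfl
  omega

lemma eqz (P s t : List ℕ) (hs : ∀ a ∈ s, a = 0) (ht : ∀ a ∈ t, a = 0)
    (hl : (P ++ s).length = (P ++ t).length) : P ++ s = P ++ t := by
  have hst : s.length = t.length := by
    simp only [List.length_append] at hl; omega
  rw [List.eq_replicate_of_mem hs, List.eq_replicate_of_mem ht, hst]

lemma len_lt (A z1 B z2 : List ℕ) (c : ℕ) (hz1 : ∀ v ∈ z1, v = 0) (hc : c ≠ 0)
    (h : A ++ z1 = B ++ c :: z2) : B.length < A.length := by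
  by_contra hle
  push_neg at hle
  have h2 := congrArg (fun l => l[B.length]?) h
  rw [List.getElem?_append_right hle, List.getElem?_append_right (le_refl _)] at h2
  simp only [Nat.sub_self, List.getElem?_cons_zero] at h2
  rcases h3 : z1[B.length - A.length]? with _ | v
  · rw [h3] at h2; exact nomatch h2
  · rw [h3] at h2
    have : v = c := Option.some.inj h2
    subst this
    exact hc (hz1 v (List.mem_of_getElem? h3))

lemma filter_erase (s t : List ℕ) (v : ℕ) (h : (s ++ v :: t).Nodup) :
    (s ++ v :: t).filter (fun i => decide (i ≠ v)) = s ++ t := by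
  rw [List.nodup_append] at h
  obtain ⟨hs, hvt, hdisj⟩ := h
  rw [List.filter_append, List.filter_cons]
  have hv : (decide (v ≠ v)) = false := by simp
  rw [hv]
  simp only [Bool.false_eq_true, if_false]
  congr 1
  · rw [List.filter_eq_self]
    intro a ha
    simp only [decide_eq_true_eq]
    rintro rfl
    exact hdisj _ ha _ List.mem_cons_self rfl
  · rw [List.filter_eq_self]
    intro a ha
    simp only [decide_eq_true_eq]
    rintro rfl
    exact (List.nodup_cons.1 hvt).1 ha

lemma helperH (n L : ℕ) (hL1 : 1 ≤ L) (hLn : L ≤ n) (c : ℕ) (hc : c ≠ 0)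
    (x y : List ℕ) (hxlen : x.length = n) (hylen : y.length = n)
    (hxc : x.getD (L-1) 0 = c) (hyc : y.getD (L-1) 0 = c)
    (hxz : ∀ i, L ≤ i → x.getD i 0 = 0) (hyz : ∀ i, L ≤ i → y.getD i 0 = 0)
    (D E : Finset ℕ) (hD : D ⊆ Finset.Icc 1 n) (hE : E ⊆ Finset.Icc 1 n)
    (hcard : D.card = E.card)
    (hdel : deleteD x D = deleteD y E)
    (hba : (deleteD (y.take (L-1)) (E ∩ Finset.Icc 1 (L-1))).length ≤
           (deleteD (x.take (L-1)) (D ∩ Finset.Icc 1 (L-1))).length) :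
    ∃ D' E' : Finset ℕ, D' ⊆ Finset.Icc 1 n ∧ E' ⊆ Finset.Icc 1 n ∧
      D'.card = D.card ∧ E'.card = E.card ∧
      deleteD (x.set (L-1) 0) D' = deleteD (y.set (L-1) 0) E' := by
  have hword : ∀ z : List ℕ, z.length = n → z.getD (L-1) 0 = c →
      (∀ i, L ≤ i → z.getD i 0 = 0) →
      (z.take (L-1)).length = L-1 ∧ z = z.take (L-1) ++ c :: z.drop L ∧
      z.set (L-1) 0 = z.take (L-1) ++ 0 :: z.drop L ∧ (∀ a ∈ z.drop L, a = 0) := by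
    intro z hzl hzc hzz
    have hul : (z.take (L-1)).length = L-1 := by
      rw [List.length_take]; omega
    have hdz : ∀ a ∈ z.drop L, a = 0 := by
      intro a ha
      obtain ⟨i, hi, rfl⟩ := List.mem_iff_getElem.1 ha
      rw [List.getElem_drop]
      have h1 : L + i < z.length := by
        rw [List.length_drop] at hi; omega
      rw [← List.getD_eq_getElem z 0 h1]
      exact hzz _ (Nat.le_add_right _ _)
    have hsplit : z = z.take (L-1) ++ c :: z.drop L := by
      conv_lhs => rw [← List.take_append_drop (L-1) z]
      congr 1
      rw [List.drop_eq_getElem_cons (show L-1 < z.length by omega)]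
      congr 1
      · rw [← hzc]
        exact (List.getD_eq_getElem z 0 _).symm
      · congr 1
        omega
    refine ⟨hul, hsplit, ?_, hdz⟩
    conv_lhs => rw [hsplit]
    rw [List.set_append]
    rw [if_neg (by omega), hul]
    simp
  obtain ⟨hulx, hsplitx, hsetx, hdzx⟩ := hword x hxlen hxc hxz
  obtain ⟨huly, hsplity, hsety, hdzy⟩ := hword y hylen hyc hyz
  have hpadgen : ∀ z : List ℕ, (z.take (L-1)).length = L-1 →
      z.set (L-1) 0 = z.take (L-1) ++ 0 :: z.drop L → (∀ a ∈ z.drop L, a = 0) →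
      ∀ S : Finset ℕ, ∃ t, deleteD (z.set (L-1) 0) S =
      deleteD (z.take (L-1)) (S ∩ Finset.Icc 1 (L-1)) ++ t ∧ ∀ a ∈ t, a = 0 := by
    intro z hul hset hdz S
    obtain ⟨t, ht, htz⟩ := deleteD_pad (z.take (L-1)) (0 :: z.drop L) S
      (by intro a ha
          rcases List.mem_cons.1 ha with rfl | h
          · rfl
          · exact hdz _ h)
    rw [hul, ← hset] at ht
    exact ⟨t, ht, htz⟩
  have hpadx := hpadgen x hulx hsetx hdzx
  have hpady := hpadgen y huly hsety hdzy
  have hzmem : ∀ (z : List ℕ) (S : Finset ℕ), (z.take (L-1)).length = L-1 →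
      z = z.take (L-1) ++ c :: z.drop L → (∀ a ∈ z.drop L, a = 0) → L ∈ S →
      ∃ t, deleteD z S = deleteD (z.take (L-1)) (S ∩ Finset.Icc 1 (L-1)) ++ t ∧ ∀ a ∈ t, a = 0 := by
    intro z S hul hsplit hdz hLS
    have harg : ∀ i, i < (c :: z.drop L).length → ((z.take (L-1)).length + i + 1) ∉ S →
        (c :: z.drop L).getD i 0 = 0 := by
      intro i hi hmem
      match i with
      | 0 =>
        exfalso
        apply hmem
        rw [hul]
        have h : L - 1 + 0 + 1 = L := by omega
        rw [h]
        exact hLS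
      | (j+1) =>
        rw [List.getD_cons_succ]
        rw [List.length_cons] at hi
        rw [List.getD_eq_getElem _ _ (by omega)]
        exact hdz _ (List.getElem_mem (by omega))
    obtain ⟨t, ht, htz⟩ := deleteD_pad' (z.take (L-1)) (c :: z.drop L) S harg
    rw [hul, ← hsplit] at ht
    exact ⟨t, ht, htz⟩
  have hznot : ∀ (z : List ℕ) (S : Finset ℕ), (z.take (L-1)).length = L-1 →
      z = z.take (L-1) ++ c :: z.drop L → (∀ a ∈ z.drop L, a = 0) → L ∉ S →
      ∃ t, deleteD z S = deleteD (z.take (L-1)) (S ∩ Finset.Icc 1 (L-1)) ++ c :: t ∧ ∀ a ∈ t, a = 0 := by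
    intro z S hul hsplit hdz hLS
    obtain ⟨t, ht, htz⟩ := deleteD_pad_cons (z.take (L-1)) c (z.drop L) S hdz
      (by rw [hul]
          have h : L - 1 + 1 = L := by omega
          rw [h]
          exact hLS)
    rw [hul, ← hsplit] at ht
    exact ⟨t, ht, htz⟩
  have combine : ∀ (D' E' : Finset ℕ) (B w : List ℕ), D' ⊆ Finset.Icc 1 n → E' ⊆ Finset.Icc 1 n →
      D'.card = E'.card →
      deleteD (x.take (L-1)) (D' ∩ Finset.Icc 1 (L-1)) = B ++ w → (∀ a ∈ w, a = 0) →
      deleteD (y.take (L-1)) (E' ∩ Finset.Icc 1 (L-1)) = B →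
      deleteD (x.set (L-1) 0) D' = deleteD (y.set (L-1) 0) E' := by
    intro D' E' B w hD' hE' hcard' hPD hw hPE
    obtain ⟨s1, h1, hs1⟩ := hpadx D'
    obtain ⟨s2, h2, hs2⟩ := hpady E'
    have hlen1 : (deleteD (x.set (L-1) 0) D').length = n - D'.card := by
      have hsub : D' ⊆ Finset.Icc 1 (x.set (L-1) 0).length := by
        rw [List.length_set, hxlen]; exact hD'
      rw [length_deleteD _ _ hsub, List.length_set, hxlen]
    have hlen2 : (deleteD (y.set (L-1) 0) E').length = n - E'.card := by
      have hsub : E' ⊆ Finset.Icc 1 (y.set (L-1) 0).length := by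
        rw [List.length_set, hylen]; exact hE'
      rw [length_deleteD _ _ hsub, List.length_set, hylen]
    have e1 : deleteD (x.set (L-1) 0) D' = B ++ (w ++ s1) := by
      rw [h1, hPD, List.append_assoc]
    have e2 : deleteD (y.set (L-1) 0) E' = B ++ s2 := by
      rw [h2, hPE]
    rw [e1, e2]
    apply eqz
    · intro a ha
      rcases List.mem_append.1 ha with h | h
      · exact hw _ h
      · exact hs1 _ h
    · exact hs2
    · rw [← e1, ← e2, hlen1, hlen2, hcard']
  by_cases hLD : L ∈ D <;> by_cases hLE : L ∈ E
  · -- L ∈ D, L ∈ E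
    obtain ⟨t1, h1, ht1⟩ := hzmem x D hulx hsplitx hdzx hLD
    obtain ⟨t2, h2, ht2⟩ := hzmem y E huly hsplity hdzy hLE
    rw [h1, h2] at hdel
    set A := deleteD (x.take (L-1)) (D ∩ Finset.Icc 1 (L-1)) with hA
    set B := deleteD (y.take (L-1)) (E ∩ Finset.Icc 1 (L-1)) with hB
    have hAB : A = B ++ t2.take (A.length - B.length) := by
      have h := congrArg (List.take A.length) hdel
      rw [List.take_append, List.take_append, List.take_length,
        Nat.sub_self, List.take_zero, List.append_nil, List.take_of_length_le hba] at h
      exact h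
    exact ⟨D, E, hD, hE, rfl, rfl, combine D E B _ hD hE hcard hAB
      (fun a ha => ht2 _ (List.mem_of_mem_take ha)) rfl⟩
  · -- L ∈ D, L ∉ E : the main case
    obtain ⟨t1, h1, ht1⟩ := hzmem x D hulx hsplitx hdzx hLD
    obtain ⟨t2, h2, ht2⟩ := hznot y E huly hsplity hdzy hLE
    rw [h1, h2] at hdel
    set A := deleteD (x.take (L-1)) (D ∩ Finset.Icc 1 (L-1)) with hA
    set B := deleteD (y.take (L-1)) (E ∩ Finset.Icc 1 (L-1)) with hB
    have hBA : B.length < A.length := len_lt A t1 B t2 c ht1 hc hdel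
    have hktake : (c :: t2).take (A.length - B.length) = c :: t2.take (A.length - B.length - 1) := by
      have h : A.length - B.length = (A.length - B.length - 1) + 1 := by omega
      rw [h, List.take_succ_cons, Nat.add_sub_cancel]
    have hAB : A = B ++ c :: t2.take (A.length - B.length - 1) := by
      have h := congrArg (List.take A.length) hdel
      rw [List.take_append, List.take_append, List.take_length,
        Nat.sub_self, List.take_zero, List.append_nil,
        List.take_of_length_le (le_of_lt hBA), hktake] at h
      exact h
    set w := t2.take (A.length - B.length - 1) with hw
    have hwz : ∀ a ∈ w, a = 0 := fun a ha => ht2 _ (List.mem_of_mem_take ha)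
    set f : ℕ → ℕ := fun i => (x.take (L-1)).getD i 0 with hf
    set l := (List.range (x.take (L-1)).length).filter
        (fun i => decide ((i+1) ∉ D ∩ Finset.Icc 1 (L-1))) with hl
    have hAform : A = l.map f := rfl
    have hllen : l.length = A.length := by rw [hAform, List.length_map]
    have ha : B.length < l.length := by omega
    set d0 := l[B.length]'ha with hd0
    have hsplitl : l = l.take B.length ++ d0 :: l.drop (B.length + 1) := by
      rw [hd0]
      conv_lhs => rw [← List.take_append_drop B.length l]
      rw [List.drop_eq_getElem_cons ha]
    have hmapsplit : A = (l.take B.length).map f ++ f d0 :: (l.drop (B.length+1)).map f := by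
      rw [hAform]
      conv_lhs => rw [hsplitl]
      rw [List.map_append, List.map_cons]
    have hlenTake : ((l.take B.length).map f).length = B.length := by
      rw [List.length_map, List.length_take]; omega
    obtain ⟨hBmap, htail⟩ := List.append_inj (hmapsplit.symm.trans hAB) hlenTake
    have hdrop : (l.drop (B.length+1)).map f = w := (List.cons.injEq _ _ _ _ ▸ htail).2
    have hdmem : d0 ∈ l := by rw [hd0]; exact List.getElem_mem ha
    have hdmem' := hdmem
    rw [hl] at hdmem'
    have hdfacts := List.mem_filter.1 hdmem'
    have hdlt : d0 < L - 1 := by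
      have h := List.mem_range.1 hdfacts.1
      omega
    have hdnot : (d0 + 1) ∉ D ∩ Finset.Icc 1 (L-1) := by
      have h := hdfacts.2
      simp only [decide_eq_true_eq] at h
      exact h
    set p := d0 + 1 with hp
    have hpIcc : p ∈ Finset.Icc 1 (L-1) := Finset.mem_Icc.2 ⟨by omega, by omega⟩
    have hpD : p ∉ D := fun hmem => hdnot (Finset.mem_inter.2 ⟨hmem, hpIcc⟩)
    have hpD' : p ∉ D.erase L := fun h => hpD (Finset.mem_of_mem_erase h)
    have hD'sub : insert p (D.erase L) ⊆ Finset.Icc 1 n := by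
      intro j hj
      rcases Finset.mem_insert.1 hj with rfl | hj'
      · exact Finset.mem_Icc.2 ⟨by omega, by omega⟩
      · exact hD (Finset.mem_of_mem_erase hj')
    have hD'card : (insert p (D.erase L)).card = D.card := by
      rw [Finset.card_insert_of_notMem hpD', Finset.card_erase_of_mem hLD]
      have : 0 < D.card := Finset.card_pos.2 ⟨L, hLD⟩
      omega
    have hD'cap : insert p (D.erase L) ∩ Finset.Icc 1 (L-1)
        = insert p (D ∩ Finset.Icc 1 (L-1)) := by
      ext j
      simp only [Finset.mem_inter, Finset.mem_insert, Finset.mem_erase, Finset.mem_Icc]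
      constructor
      · rintro ⟨h | ⟨hne, hjD⟩, hj2⟩
        · exact Or.inl h
        · exact Or.inr ⟨hjD, hj2⟩
      · rintro (rfl | ⟨hjD, hj2⟩)
        · exact ⟨Or.inl rfl, by omega, by omega⟩
        · exact ⟨Or.inr ⟨by omega, hjD⟩, hj2⟩
    have hprefix : deleteD (x.take (L-1)) (insert p (D ∩ Finset.Icc 1 (L-1))) = B ++ w := by
      have hstep1 : deleteD (x.take (L-1)) (insert p (D ∩ Finset.Icc 1 (L-1)))
          = (l.filter (fun i => decide (i ≠ d0))).map f := by
        have hstep0 : deleteD (x.take (L-1)) (insert p (D ∩ Finset.Icc 1 (L-1)))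
            = ((List.range (x.take (L-1)).length).filter
              (fun i => decide ((i+1) ∉ insert p (D ∩ Finset.Icc 1 (L-1))))).map f := rfl
        rw [hstep0, hl, List.filter_filter]
        congr 1
        apply List.filter_congr
        intro i _
        have hiff : i + 1 = p ↔ i = d0 := by omega
        by_cases h1 : i = d0 <;> by_cases h2 : (i+1) ∈ D ∩ Finset.Icc 1 (L-1) <;>
          simp [Finset.mem_insert, h1, h2, hiff, hp]
      rw [hstep1]
      have hnodup : l.Nodup := by rw [hl]; exact List.nodup_range.filter _
      rw [hsplitl] at hnodup
      conv_lhs => rw [hsplitl]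
      rw [filter_erase _ _ _ hnodup, List.map_append, hBmap, hdrop]
    exact ⟨insert p (D.erase L), E, hD'sub, hE, hD'card, rfl,
      combine _ E B w hD'sub hE (by rw [hD'card, hcard]) (by rw [hD'cap]; exact hprefix) hwz rfl⟩
  · -- L ∉ D, L ∈ E : impossible
    obtain ⟨t1, h1, ht1⟩ := hznot x D hulx hsplitx hdzx hLD
    obtain ⟨t2, h2, ht2⟩ := hzmem y E huly hsplity hdzy hLE
    rw [h1, h2] at hdel
    have h := len_lt _ t2 _ t1 c ht2 hc hdel.symm
    omega
  · -- L ∉ D, L ∉ E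
    obtain ⟨t1, h1, ht1⟩ := hznot x D hulx hsplitx hdzx hLD
    obtain ⟨t2, h2, ht2⟩ := hznot y E huly hsplity hdzy hLE
    rw [h1, h2] at hdel
    set A := deleteD (x.take (L-1)) (D ∩ Finset.Icc 1 (L-1)) with hA
    set B := deleteD (y.take (L-1)) (E ∩ Finset.Icc 1 (L-1)) with hB
    have hle : A.length < B.length + 1 := by
      have heq : (B ++ [c]) ++ t2 = A ++ c :: t1 := by
        rw [List.append_assoc]
        exact hdel.symm
      have h := len_lt (B ++ [c]) t2 A t1 c ht2 hc heq
      simpa using h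
    have hlen : A.length = B.length := by omega
    obtain ⟨hABeq, -⟩ := List.append_inj hdel hlen
    have hABeq' : A = B ++ [] := by rw [List.append_nil]; exact hABeq
    exact ⟨D, E, hD, hE, rfl, rfl, combine D E B [] hD hE hcard hABeq' (by simp) rfl⟩

theorem replacement_lemma (q d n m : ℕ) (hq : 2 ≤ q) (hd : 1 ≤ d) (hmpos : 0 < m)
    (x y : List ℕ) (hxlen : x.length = n) (hylen : y.length = n)
    (hx : ∀ a ∈ x, a < q) (hy : ∀ a ∈ y, a < q)
    (hcong : moment (W (q - 1) d) x ≡ moment (W (q - 1) d) y [MOD m])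
    (D E : Finset ℕ) (hD : D ⊆ Finset.Icc 1 n) (hE : E ⊆ Finset.Icc 1 n)
    (hcard : D.card = E.card) (hd' : D.card ≤ d)
    (hdel : deleteD x D = deleteD y E)
    (L : ℕ) (hL1 : 1 ≤ L) (hLn : L ≤ n)
    (hxy : x.getD (L - 1) 0 = y.getD (L - 1) 0) (hpos : 0 < x.getD (L - 1) 0)
    (hzero : ∀ i, L < i → i ≤ n → x.getD (i - 1) 0 = 0 ∧ y.getD (i - 1) 0 = 0) :
    moment (W (q - 1) d) (x.set (L - 1) 0) ≡ moment (W (q - 1) d) (y.set (L - 1) 0) [MOD m] ∧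
    ∃ D' E' : Finset ℕ, D' ⊆ Finset.Icc 1 n ∧ E' ⊆ Finset.Icc 1 n ∧
      D'.card = D.card ∧ E'.card = E.card ∧
      deleteD (x.set (L - 1) 0) D' = deleteD (y.set (L - 1) 0) E' := by
  have hLlt : L - 1 < x.length := by rw [hxlen]; omega
  have hLlt' : L - 1 < y.length := by rw [hylen]; omega
  constructor
  · have hx1 := moment_set (W (q-1) d) x (L-1) hLlt
    have hy1 := moment_set (W (q-1) d) y (L-1) hLlt'
    rw [hx1, hy1, hxy] at hcong
    exact Nat.ModEq.add_right_cancel' _ hcong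
  · have hc : x.getD (L-1) 0 ≠ 0 := by omega
    have hxz' : ∀ i, L ≤ i → x.getD i 0 = 0 := by
      intro i hi
      by_cases h : i < n
      · have hh := (hzero (i+1) (by omega) (by omega)).1
        simpa using hh
      · apply List.getD_eq_default
        rw [hxlen]; omega
    have hyz' : ∀ i, L ≤ i → y.getD i 0 = 0 := by
      intro i hi
      by_cases h : i < n
      · have hh := (hzero (i+1) (by omega) (by omega)).2
        simpa using hh
      · apply List.getD_eq_default
        rw [hylen]; omega
    rcases le_total ((deleteD (y.take (L-1)) (E ∩ Finset.Icc 1 (L-1))).length)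
        ((deleteD (x.take (L-1)) (D ∩ Finset.Icc 1 (L-1))).length) with hba | hba
    · exact helperH n L hL1 hLn _ hc x y hxlen hylen rfl hxy.symm hxz' hyz' D E hD hE hcard
        hdel hba
    · obtain ⟨E', D', hE's, hD's, hE'c, hD'c, heq⟩ :=
        helperH n L hL1 hLn _ hc y x hylen hxlen hxy.symm rfl hyz' hxz' E D hE hD hcard.symm
          hdel.symm hba
      exact ⟨D', E', hD's, hE's, hD'c, hE'c, heq.symm⟩
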